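/- Let G be a connected finite graph with n vertices and let 2 ≤ ℓ ≤ n−1. Then β_ℓ^s(G) = ℓ+1 if and only if n = ℓ+1 or G is the star K_{1,ℓ+1}. -/

import Mathlib

open SimpleGraph

variable {V : Type*}

/-- Distance from a vertex to a set of vertices. -/
noncomputable def dSet (G : SimpleGraph V) (s : V) (X : Set V) : ℕ :=
  sInf ((G.dist s) '' X)

/-- `S` is an `ℓ`-solid-resolving set of `G`. -/
def LSolid (G : SimpleGraph V) (S : Set V) (ℓ : ℕ) : Prop :=
  ∀ X Y : Set V, X.Nonempty → Y.Nonempty → X.ncard ≤ ℓ → X ≠ Y →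
    ∃ s ∈ S, dSet G s X ≠ dSet G s Y

/-- `S` is an `{ℓ}`-resolving set of `G`. -/
def LResolving (G : SimpleGraph V) (S : Set V) (ℓ : ℕ) : Prop :=
  ∀ X Y : Set V, X.Nonempty → Y.Nonempty → X.ncard ≤ ℓ → Y.ncard ≤ ℓ → X ≠ Y →
    ∃ s ∈ S, dSet G s X ≠ dSet G s Y

/-- The `ℓ`-solid-metric dimension of `G`. -/
noncomputable def solidDim (G : SimpleGraph V) (ℓ : ℕ) : ℕ :=
  sInf {k | ∃ S : Set V, LSolid G S ℓ ∧ S.ncard = k}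

/-- The `{ℓ}`-metric dimension of `G`. -/
noncomputable def lDim (G : SimpleGraph V) (ℓ : ℕ) : ℕ :=
  sInf {k | ∃ S : Set V, LResolving G S ℓ ∧ S.ncard = k}


section Helpers

variable {G : SimpleGraph V}


lemma dSet_le {s x : V} {X : Set V} (hx : x ∈ X) : dSet G s X ≤ G.dist s x :=
  Nat.sInf_le ⟨x, hx, rfl⟩

lemma dSet_exists {s : V} {X : Set V} (hX : X.Nonempty) :
    ∃ x ∈ X, dSet G s X = G.dist s x := by
  obtain ⟨x, hx, hx'⟩ := Nat.sInf_mem (hX.image (G.dist s))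
  exact ⟨x, hx, hx'.symm⟩

lemma dSet_eq_zero_iff (hG : G.Connected) {s : V} {X : Set V} (hX : X.Nonempty) :
    dSet G s X = 0 ↔ s ∈ X := by
  constructor
  · intro h
    obtain ⟨x, hx, hx'⟩ := dSet_exists (G := G) (s := s) hX
    rw [h] at hx'
    rwa [(hG.dist_eq_zero_iff).mp hx'.symm]
  · intro h
    have := dSet_le (G := G) (s := s) h
    rw [SimpleGraph.dist_self] at this
    omega

lemma dSet_insert {s v : V} {X : Set V} (hX : X.Nonempty) :
    dSet G s (insert v X) = min (G.dist s v) (dSet G s X) := by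
  unfold dSet
  rw [Set.image_insert_eq, csInf_insert (OrderBot.bddBelow _) (hX.image _)]
lemma solid_sep {S : Set V} {ℓ : ℕ} (hS : LSolid G S ℓ)
    {v : V} {Y : Set V} (hY : Y.Nonempty) (hYc : Y.ncard ≤ ℓ) (hv : v ∉ Y) :
    ∃ s ∈ S, G.dist s v < dSet G s Y := by
  obtain ⟨s, hs, hne⟩ := hS Y (insert v Y) hY (Set.insert_nonempty v Y) hYc
    (fun h => hv (h ▸ Set.mem_insert v Y))
  refine ⟨s, hs, ?_⟩
  rw [dSet_insert hY] at hne
  omega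

lemma lsolid_univ (hG : G.Connected) (ℓ : ℕ) : LSolid G Set.univ ℓ := by
  intro X Y hX hY _ hne
  obtain ⟨s, hs⟩ : ∃ s, (s ∈ X ∧ s ∉ Y) ∨ (s ∈ Y ∧ s ∉ X) := by
    by_contra h
    push_neg at h
    exact hne (Set.ext fun t => ⟨fun ht => (h t).1 ht, fun ht => (h t).2 ht⟩)
  refine ⟨s, Set.mem_univ s, ?_⟩
  rcases hs with ⟨h1, h2⟩ | ⟨h1, h2⟩
  · rw [(dSet_eq_zero_iff hG hX).mpr h1]
    exact fun h => h2 ((dSet_eq_zero_iff hG hY).mp h.symm)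
  · rw [(dSet_eq_zero_iff hG hY).mpr h1]
    exact fun h => h2 ((dSet_eq_zero_iff hG hX).mp h)

lemma solid_card_lb [Fintype V] (hG : G.Connected) {S : Set V} {ℓ : ℕ}
    (hS : LSolid G S ℓ) (hℓ : 2 ≤ ℓ) (hn : ℓ + 1 ≤ Fintype.card V) :
    ℓ + 1 ≤ S.ncard := by
  by_contra hlt
  push_neg at hlt
  have hSl : S.ncard ≤ ℓ := by omega
  have hSne : S ≠ Set.univ := by
    intro h
    rw [h, Set.ncard_univ, Nat.card_eq_fintype_card] at hSl
    omega
  obtain ⟨x, hx⟩ : ∃ x, x ∉ S := by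
    by_contra h
    push_neg at h
    exact hSne (Set.eq_univ_of_forall h)
  rcases S.eq_empty_or_nonempty with hE | hNE
  · obtain ⟨a, b, hab⟩ := Fintype.exists_pair_of_one_lt_card (α := V) (by omega)
    obtain ⟨s, hs, -⟩ := hS {a} {b} ⟨a, rfl⟩ ⟨b, rfl⟩
      (by simp [Set.ncard_singleton]; omega) (by simpa [Set.singleton_eq_singleton_iff] using hab)
    simp [hE] at hs
  · obtain ⟨s, hs, hne⟩ := hS S (insert x S) hNE (Set.insert_nonempty x S) hSl
      (fun h => hx (h ▸ Set.mem_insert x S))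
    apply hne
    rw [(dSet_eq_zero_iff hG hNE).mpr hs, (dSet_eq_zero_iff hG (Set.insert_nonempty x S)).mpr
      (Set.mem_insert_of_mem x hs)]

lemma star_solid [Fintype V] (hG : G.Connected) {c : V} {ℓ : ℕ} (hℓ : 2 ≤ ℓ)
    (hcard : Fintype.card V = ℓ + 2)
    (hcadj : ∀ v, v ≠ c → G.Adj c v)
    (honly : ∀ u v, G.Adj u v → u = c ∨ v = c) :
    LSolid G {c}ᶜ ℓ := by
  have hd1 : ∀ v, v ≠ c → G.dist c v = 1 := fun v hv => dist_eq_one_iff_adj.mpr (hcadj v hv)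
  have hd2 : ∀ u v, u ≠ v → u ≠ c → v ≠ c → G.dist u v = 2 := by
    intro u v huv hu hv
    have hna : ¬ G.Adj u v := by
      intro hadj
      rcases honly u v hadj with h | h
      · exact hu h
      · exact hv h
    have hle : G.dist u v ≤ 2 := by
      have hle' := dist_le (Walk.cons (hcadj u hu).symm (hcadj v hv).toWalk)
      simpa using hle'
    have h0 : G.dist u v ≠ 0 := fun h => huv (hG.dist_eq_zero_iff.mp h)
    have h1 : G.dist u v ≠ 1 := fun h => hna (dist_eq_one_iff_adj.mp h)
    omega
  have compute1 : ∀ (t : V) (Z : Set V), t ≠ c → c ∈ Z → t ∉ Z → dSet G t Z = 1 := by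
    intro t Z htc hcZ htZ
    have hle : dSet G t Z ≤ 1 := by
      have := dSet_le (G := G) (s := t) hcZ
      rwa [SimpleGraph.dist_comm, hd1 t htc] at this
    have h0 : dSet G t Z ≠ 0 := fun h => htZ ((dSet_eq_zero_iff hG ⟨c, hcZ⟩).mp h)
    omega
  have compute2 : ∀ (t : V) (Z : Set V), Z.Nonempty → t ≠ c → c ∉ Z → t ∉ Z →
      dSet G t Z = 2 := by
    intro t Z hZ htc hcZ htZ
    obtain ⟨y, hy, hy'⟩ := dSet_exists (G := G) (s := t) hZ
    rw [hy', hd2 t y (fun h => htZ (h ▸ hy)) htc (fun h => hcZ (h ▸ hy))]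
  intro X Y hX hY hXc hne
  by_contra hcon
  push_neg at hcon
  have hXY : ∀ s, s ≠ c → (s ∈ X ↔ s ∈ Y) := by
    intro s hs
    rw [← dSet_eq_zero_iff hG hX (s := s), ← dSet_eq_zero_iff hG hY (s := s),
      hcon s (Set.mem_compl_singleton_iff.mpr hs)]
  have hciff : ¬ (c ∈ X ↔ c ∈ Y) := by
    intro hiff
    apply hne
    ext s
    by_cases hs : s = c
    · subst hs; exact hiff
    · exact hXY s hs
  have hcompl : ({c}ᶜ : Set V).ncard = ℓ + 1 := by
    have := Set.ncard_add_ncard_compl ({c} : Set V) (Set.toFinite _) (Set.toFinite _)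
    rw [Set.ncard_singleton, Nat.card_eq_fintype_card, hcard] at this
    omega
  obtain ⟨t, htc, htX⟩ : ∃ t, t ≠ c ∧ t ∉ X := by
    by_contra hc
    push_neg at hc
    have hsub : ({c}ᶜ : Set V) ⊆ X \ {c} := fun t ht => ⟨hc t ht, ht⟩
    have h1 := Set.ncard_le_ncard hsub ((X.toFinite).diff)
    have h2 := Set.ncard_le_ncard (Set.diff_subset (s := X) (t := {c})) X.toFinite
    omega
  have htY : t ∉ Y := fun h => htX ((hXY t htc).mpr h)
  have heq := hcon t (Set.mem_compl_singleton_iff.mpr htc)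
  rcases Classical.em (c ∈ X) with hcX | hcX
  · have hcY : c ∉ Y := fun h => hciff ⟨fun _ => h, fun _ => hcX⟩
    rw [compute1 t X htc hcX htX, compute2 t Y hY htc hcY htY] at heq
    omega
  · have hcY : c ∈ Y := by
      by_contra hcY
      exact hciff ⟨fun h => absurd h hcX, fun h => absurd h hcY⟩
    rw [compute2 t X hX htc hcX htX, compute1 t Y htc hcY htY] at heq
    omega

lemma forward_star [Fintype V] (hG : G.Connected) {S : Set V} {ℓ : ℕ} (hℓ : 2 ≤ ℓ)
    (hS : LSolid G S ℓ) (hScard : S.ncard = ℓ + 1) (hn : ℓ + 2 ≤ Fintype.card V) :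
    ∃ c : V, Fintype.card V = ℓ + 2 ∧ (∀ v, v ≠ c → G.Adj c v) ∧
      (∀ u v, G.Adj u v → u = c ∨ v = c) := by
  have star_ineq : ∀ x ∉ S, ∀ s ∈ S, ∀ t ∈ S, t ≠ s → G.dist s x < G.dist s t := by
    intro x hx s hs t ht hts
    have hYcard : (S \ {s}).ncard = ℓ := by
      rw [Set.ncard_diff_singleton_of_mem hs, hScard]
      omega
    have hYne : (S \ {s}).Nonempty := Set.nonempty_of_ncard_ne_zero (by omega)
    obtain ⟨s', hs', hlt⟩ := solid_sep hS hYne (le_of_eq hYcard) (fun h => hx h.1)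
    have hs's : s' = s := by
      by_contra hne
      have hmem : s' ∈ S \ {s} := ⟨hs', by simpa using hne⟩
      have h0 : dSet G s' (S \ {s}) = 0 := (dSet_eq_zero_iff hG hYne).mpr hmem
      omega
    subst hs's
    exact lt_of_lt_of_le hlt (dSet_le ⟨ht, by simpa using hts⟩)
  have pair : ∀ x₁, x₁ ∉ S → ∀ x₂, x₂ ∉ S → x₁ ≠ x₂ → ∀ s ∈ S, ∀ t ∈ S, s ≠ t →
      G.dist s x₁ < G.dist s x₂ ∨ G.dist t x₁ < G.dist t x₂ := by
    intro x₁ hx₁ x₂ hx₂ hx12 s hs t ht hst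
    have h1 : (S \ {s}).ncard = ℓ := by
      rw [Set.ncard_diff_singleton_of_mem hs, hScard]
      omega
    have htmem : t ∈ S \ {s} := ⟨ht, by simpa using (Ne.symm hst)⟩
    have h2 : ((S \ {s}) \ {t}).ncard = ℓ - 1 := by
      rw [Set.ncard_diff_singleton_of_mem htmem, h1]
    set Y : Set V := insert x₂ ((S \ {s}) \ {t}) with hYdef
    have hYcard : Y.ncard ≤ ℓ := by
      have hi := Set.ncard_insert_le x₂ ((S \ {s}) \ {t})
      rw [← hYdef] at hi
      omega
    have hYne : Y.Nonempty := ⟨x₂, Set.mem_insert _ _⟩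
    have hx1Y : x₁ ∉ Y := by
      intro h
      rcases h with h | h
      · exact hx12 h
      · exact hx₁ h.1.1
    obtain ⟨s', hs'S, hlt⟩ := solid_sep hS hYne hYcard hx1Y
    have hs'Y : s' ∉ Y := by
      intro h
      have h0 : dSet G s' Y = 0 := (dSet_eq_zero_iff hG hYne).mpr h
      omega
    have hlt2 : G.dist s' x₁ < G.dist s' x₂ :=
      lt_of_lt_of_le hlt (dSet_le (Set.mem_insert _ _))
    have hcase : s' = s ∨ s' = t := by
      by_contra h
      push_neg at h
      exact hs'Y (Set.mem_insert_of_mem _ ⟨⟨hs'S, by simpa using h.1⟩, by simpa using h.2⟩)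
    rcases hcase with h | h
    · exact Or.inl (h ▸ hlt2)
    · exact Or.inr (h ▸ hlt2)
  have huniq : ∀ x₁, x₁ ∉ S → ∀ x₂, x₂ ∉ S → x₁ = x₂ := by
    intro x₁ hx₁ x₂ hx₂
    by_contra h12
    obtain ⟨s₁, hs₁⟩ : S.Nonempty := Set.nonempty_of_ncard_ne_zero (by omega)
    obtain ⟨s₂, hs₂⟩ : (S \ {s₁}).Nonempty := Set.nonempty_of_ncard_ne_zero (by
      rw [Set.ncard_diff_singleton_of_mem hs₁, hScard]; omega)
    obtain ⟨s₃, hs₃⟩ : ((S \ {s₁}) \ {s₂}).Nonempty := Set.nonempty_of_ncard_ne_zero (by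
      rw [Set.ncard_diff_singleton_of_mem hs₂,
        Set.ncard_diff_singleton_of_mem hs₁, hScard]; omega)
    have hs₂S : s₂ ∈ S := hs₂.1
    have hs₃S : s₃ ∈ S := hs₃.1.1
    have h12' : s₁ ≠ s₂ := by have := hs₂.2; simp at this; exact (Ne.symm this)
    have h13' : s₁ ≠ s₃ := by have := hs₃.1.2; simp at this; exact (Ne.symm this)
    have h23' : s₂ ≠ s₃ := by have := hs₃.2; simp at this; exact (Ne.symm this)
    have p1 := pair x₁ hx₁ x₂ hx₂ h12 s₁ hs₁ s₂ hs₂S h12'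
    have p2 := pair x₁ hx₁ x₂ hx₂ h12 s₁ hs₁ s₃ hs₃S h13'
    have p3 := pair x₁ hx₁ x₂ hx₂ h12 s₂ hs₂S s₃ hs₃S h23'
    have q1 := pair x₂ hx₂ x₁ hx₁ (Ne.symm h12) s₁ hs₁ s₂ hs₂S h12'
    have q2 := pair x₂ hx₂ x₁ hx₁ (Ne.symm h12) s₁ hs₁ s₃ hs₃S h13'
    have q3 := pair x₂ hx₂ x₁ hx₁ (Ne.symm h12) s₂ hs₂S s₃ hs₃S h23'
    rcases p1 with h | h <;> rcases p2 with h' | h' <;> rcases p3 with h'' | h'' <;>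
      rcases q1 with g | g <;> rcases q2 with g' | g' <;> rcases q3 with g'' | g'' <;> omega
  obtain ⟨x, hx⟩ : ∃ x, x ∉ S := by
    by_contra h
    push_neg at h
    have : S = Set.univ := Set.eq_univ_of_forall h
    rw [this, Set.ncard_univ, Nat.card_eq_fintype_card] at hScard
    omega
  have hSc : ∀ y, y ∉ S → y = x := fun y hy => huniq y hy x hx
  have hcard : Fintype.card V = ℓ + 2 := by
    have hc : (Sᶜ : Set V) = {x} := by
      ext y
      constructor
      · intro hy
        exact hSc y hy
      · intro hy
        simp only [Set.mem_singleton_iff] at hy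
        subst hy
        exact hx
    have := Set.ncard_add_ncard_compl S S.toFinite (Set.toFinite _)
    rw [hc, Set.ncard_singleton, hScard, Nat.card_eq_fintype_card] at this
    omega
  have hadj : ∀ s ∈ S, G.Adj s x := by
    intro s hs
    have hsx : s ≠ x := fun h => hx (h ▸ hs)
    have hd0 : G.dist s x ≠ 0 := fun h => hsx (hG.dist_eq_zero_iff.mp h)
    by_contra hna
    obtain ⟨p, hp⟩ := (hG s x).exists_walk_length_eq_dist
    have hplen : 0 < p.length := by omega
    have hadj1 := p.adj_getVert_succ (i := 0) hplen
    rw [p.getVert_zero] at hadj1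
    have hwx : p.getVert 1 ≠ x := fun h => hna (h ▸ hadj1)
    have hwS : p.getVert 1 ∈ S := by
      by_contra h
      exact hwx (hSc _ h)
    have hws : p.getVert 1 ≠ s := (hadj1.ne).symm
    have hst := star_ineq x hx s hs (p.getVert 1) hwS hws
    have hd1 : G.dist s (p.getVert 1) = 1 := dist_eq_one_iff_adj.mpr hadj1
    omega
  have hnoedge : ∀ u v, u ∈ S → v ∈ S → ¬ G.Adj u v := by
    intro u v hu hv hadj'
    have h1 : G.dist u v = 1 := dist_eq_one_iff_adj.mpr hadj'
    have h2 := star_ineq x hx u hu v hv (Ne.symm hadj'.ne)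
    have h0 : G.dist u x ≠ 0 := fun h => hx ((hG.dist_eq_zero_iff.mp h) ▸ hu)
    omega
  refine ⟨x, hcard, ?_, ?_⟩
  · intro v hv
    have hvS : v ∈ S := by
      by_contra h
      exact hv (hSc v h)
    exact (hadj v hvS).symm
  · intro u v hadj'
    by_contra h
    push_neg at h
    have huS : u ∈ S := by
      by_contra h'
      exact h.1 (hSc u h')
    have hvS : v ∈ S := by
      by_contra h'
      exact h.2 (hSc v h')
    exact hnoedge u v huS hvS hadj'

lemma iso_of_star [Fintype V] {c : V} {ℓ : ℕ}
    (hcard : Fintype.card V = ℓ + 2)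
    (hcadj : ∀ v, v ≠ c → G.Adj c v)
    (honly : ∀ u v, G.Adj u v → u = c ∨ v = c) :
    Nonempty (G ≃g completeBipartiteGraph (Fin 1) (Fin (ℓ + 1))) := by
  classical
  have hc1 : Fintype.card ({c} : Set V) = 1 := by simp
  have hc2 : Fintype.card (({c}ᶜ : Set V)) = ℓ + 1 := by
    rw [Fintype.card_compl_set]
    simp [hcard]
  let e1 : ({c} : Set V) ≃ Fin 1 := Fintype.equivFinOfCardEq hc1
  let e2 : (({c}ᶜ : Set V)) ≃ Fin (ℓ + 1) := Fintype.equivFinOfCardEq hc2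
  let e : V ≃ (Fin 1) ⊕ (Fin (ℓ + 1)) :=
    (Equiv.Set.sumCompl ({c} : Set V)).symm.trans (Equiv.sumCongr e1 e2)
  have hmem : ∀ (a : V) (h : a ∈ ({c} : Set V)), e a = Sum.inl (e1 ⟨a, h⟩) := by
    intro a h
    simp only [e, Equiv.trans_apply, Equiv.Set.sumCompl_symm_apply_of_mem h,
      Equiv.sumCongr_apply, Sum.map_inl]
  have hnot : ∀ (a : V) (h : a ∉ ({c} : Set V)), e a = Sum.inr (e2 ⟨a, h⟩) := by
    intro a h
    simp only [e, Equiv.trans_apply, Equiv.Set.sumCompl_symm_apply_of_notMem h,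
      Equiv.sumCongr_apply, Sum.map_inr]
  have he : ∀ a : V, (e a).isLeft ↔ a = c := by
    intro a
    by_cases h : a = c
    · rw [hmem a (by simp [h])]
      simp [h]
    · rw [hnot a (by simp [h])]
      simp [h]
  have he' : ∀ a : V, (e a).isRight ↔ a ≠ c := by
    intro a
    by_cases h : a = c
    · rw [hmem a (by simp [h])]
      simp [h]
    · rw [hnot a (by simp [h])]
      simp [h]
  refine ⟨⟨e, ?_⟩⟩
  intro a b
  show ((e a).isLeft ∧ (e b).isRight ∨ (e a).isRight ∧ (e b).isLeft) ↔ G.Adj a b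
  constructor
  · rintro (⟨h1, h2⟩ | ⟨h1, h2⟩)
    · have hac : a = c := (he a).mp h1
      have hbc : b ≠ c := (he' b).mp h2
      exact hac ▸ (hcadj b hbc)
    · have hbc : b = c := (he b).mp h2
      have hac : a ≠ c := (he' a).mp h1
      exact hbc ▸ (hcadj a hac).symm
  · intro hadj
    rcases honly a b hadj with h | h
    · exact Or.inl ⟨(he a).mpr h, (he' b).mpr (fun hb => hadj.ne (h.trans hb.symm))⟩
    · exact Or.inr ⟨(he' a).mpr (fun ha => hadj.ne (ha.trans h.symm)), (he b).mpr h⟩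

lemma star_of_iso [Fintype V] {ℓ : ℕ}
    (f : G ≃g completeBipartiteGraph (Fin 1) (Fin (ℓ + 1))) :
    ∃ c : V, Fintype.card V = ℓ + 2 ∧ (∀ v, v ≠ c → G.Adj c v) ∧
      (∀ u v, G.Adj u v → u = c ∨ v = c) := by
  classical
  refine ⟨f.symm (Sum.inl 0), ?_, ?_, ?_⟩
  · rw [Fintype.card_congr f.toEquiv, Fintype.card_sum, Fintype.card_fin, Fintype.card_fin]
    omega
  · intro v hv
    have hfv : ∃ w : Fin (ℓ + 1), f v = Sum.inr w := by
      cases hfv : f v with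
      | inl i =>
        exfalso
        apply hv
        have : f v = Sum.inl 0 := by rw [hfv]; congr; exact Subsingleton.elim _ _
        exact f.toEquiv.eq_symm_apply.mpr this
      | inr w => exact ⟨w, rfl⟩
    obtain ⟨w, hw⟩ := hfv
    have hadj : (completeBipartiteGraph (Fin 1) (Fin (ℓ + 1))).Adj
        (f (f.symm (Sum.inl 0))) (f v) := by
      rw [hw, RelIso.apply_symm_apply]
      exact Or.inl ⟨rfl, rfl⟩
    exact f.map_rel_iff.mp hadj
  · intro u v hadj
    have hadj' : (completeBipartiteGraph (Fin 1) (Fin (ℓ + 1))).Adj (f u) (f v) :=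
      f.map_rel_iff.mpr hadj
    rcases hadj' with ⟨h1, _⟩ | ⟨_, h2⟩
    · left
      obtain ⟨i, hi⟩ := Sum.isLeft_iff.mp h1
      have : f u = Sum.inl 0 := by rw [hi]; congr; exact Subsingleton.elim _ _
      exact f.toEquiv.eq_symm_apply.mpr this
    · right
      obtain ⟨i, hi⟩ := Sum.isLeft_iff.mp h2
      have : f v = Sum.inl 0 := by rw [hi]; congr; exact Subsingleton.elim _ _
      exact f.toEquiv.eq_symm_apply.mpr this

end Helpers

theorem stmt_7 [Fintype V] (G : SimpleGraph V) (hG : G.Connected) (ℓ : ℕ)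
    (hℓ : 2 ≤ ℓ) (hn : ℓ ≤ Fintype.card V - 1) :
    solidDim G ℓ = ℓ + 1 ↔
      Fintype.card V = ℓ + 1 ∨
        Nonempty (G ≃g completeBipartiteGraph (Fin 1) (Fin (ℓ + 1))) := by
  classical
  simp only [solidDim]
  have hn' : ℓ + 1 ≤ Fintype.card V := by
    have hpos : 0 < Fintype.card V := Fintype.card_pos_iff.mpr hG.nonempty
    omega
  have hTne : {k | ∃ S : Set V, LSolid G S ℓ ∧ S.ncard = k}.Nonempty :=
    ⟨(Set.univ : Set V).ncard, Set.univ, lsolid_univ hG ℓ, rfl⟩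
  have hlb : ℓ + 1 ≤ sInf {k | ∃ S : Set V, LSolid G S ℓ ∧ S.ncard = k} := by
    obtain ⟨S, hS, hcard⟩ := Nat.sInf_mem hTne
    have hcl := solid_card_lb hG hS hℓ hn'
    omega
  constructor
  · intro h
    rcases Nat.lt_or_ge (Fintype.card V) (ℓ + 2) with hc | hc
    · left
      omega
    · right
      obtain ⟨S, hS, hScard⟩ := Nat.sInf_mem hTne
      have hScard' : S.ncard = ℓ + 1 := by
        omega
      obtain ⟨c, hcd, h1, h2⟩ := forward_star hG hℓ hS hScard' hc
      exact iso_of_star hcd h1 h2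
  · rintro (hcase | hf)
    · refine le_antisymm (Nat.sInf_le ?_) hlb
      exact ⟨Set.univ, lsolid_univ hG ℓ,
        by rw [Set.ncard_univ, Nat.card_eq_fintype_card, hcase]⟩
    · obtain ⟨f⟩ := hf
      obtain ⟨c, hcd, h1, h2⟩ := star_of_iso f
      refine le_antisymm (Nat.sInf_le ?_) hlb
      refine ⟨{c}ᶜ, star_solid hG hℓ hcd h1 h2, ?_⟩
      have hcc := Set.ncard_add_ncard_compl ({c} : Set V) (Set.toFinite _) (Set.toFinite _)
      rw [Set.ncard_singleton, Nat.card_eq_fintype_card, hcd] at hcc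
      omega
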